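/- Let n ≥ 1, let μ = (μ₁,…,μ_k) be a weak composition of n, and let μ′ be any rearrangement of μ. Define F_μ := Σ t^{des(w)+1}(1+t)^{n−1−2·des(w)}, the sum being over all multiset permutations w of M(μ) that have no double descent and satisfy w_{n−1} ≤ w_n. Then F_μ = F_{μ′} as polynomials in t. -/

import Mathlib

attribute [local instance] Classical.propDecidable

open Polynomial Finset

/-- The number of descents of the word `w = w₁ ⋯ w_m`:
indices `i ∈ [m-1]` with `w_i > w_{i+1}`. -/
noncomputable def desF {m : ℕ} (w : Fin m → ℕ) : ℕ :=
  (Finset.univ.filter fun i : Fin (m - 1) =>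
      w ⟨(i : ℕ) + 1, by have := i.2; omega⟩ < w ⟨(i : ℕ), by have := i.2; omega⟩).card

/-- The word `w = w₁ ⋯ w_m` has no double descent (no `i` with `w_i > w_{i+1} > w_{i+2}`). -/
def NDDF {m : ℕ} (w : Fin m → ℕ) : Prop :=
  ∀ i : ℕ, ∀ h : i + 2 < m,
    ¬(w ⟨i + 1, by omega⟩ < w ⟨i, by omega⟩ ∧ w ⟨i + 2, h⟩ < w ⟨i + 1, by omega⟩)

/-- `w` is a multiset permutation of the multiset `M(μ)` in which each letter
`i ∈ [k]` appears with multiplicity `μ_i`. -/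
def IsMsPermOf {n k : ℕ} (μ : Fin k → ℕ) (w : Fin n → ℕ) : Prop :=
  (∀ j, ∃ i : Fin k, w j = (i : ℕ) + 1) ∧
    ∀ i : Fin k, (Finset.univ.filter fun j : Fin n => w j = (i : ℕ) + 1).card = μ i

/-- `F_μ = ∑ t^{des w + 1} (1+t)^{n-1-2 des w}`, summed over all multiset permutations
`w` of `M(μ)` with no double descent satisfying `w_{n-1} ≤ w_n`. -/
noncomputable def Fpoly (n k : ℕ) (μ : Fin k → ℕ) : Polynomial ℤ :=
  ∑ w ∈ (Fintype.piFinset fun _ : Fin n => Finset.Icc 1 k).filter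
      (fun w => IsMsPermOf μ w ∧ NDDF w ∧
        ∀ h : 0 < n, w ⟨n - 2, by omega⟩ ≤ w ⟨n - 1, by omega⟩),
    (X : Polynomial ℤ) ^ (desF w + 1) * (X + 1) ^ (n - 1 - 2 * desF w)


namespace Stmt18

variable {n k : ℕ}

/-- Descent set of a word. -/
noncomputable def Des {m : ℕ} (w : Fin m → ℕ) : Finset (Fin (m - 1)) :=
  Finset.univ.filter fun i : Fin (m - 1) =>
      w ⟨(i : ℕ) + 1, by have := i.2; omega⟩ < w ⟨(i : ℕ), by have := i.2; omega⟩

lemma mem_Des {m : ℕ} (w : Fin m → ℕ) (i : Fin (m - 1)) :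
    i ∈ Des w ↔ w ⟨(i : ℕ) + 1, by have := i.2; omega⟩ < w ⟨(i : ℕ), by have := i.2; omega⟩ := by
  simp [Des]

variable (S : Finset (Fin (n - 1)))

/-- Block index of a position. -/
noncomputable def blk (p : Fin n) : ℕ :=
  (Finset.filter (fun s : Fin (n - 1) => (s : ℕ) < (p : ℕ)) S).card

noncomputable def block (j : ℕ) : Finset (Fin n) := Finset.univ.filter fun p => blk S p = j

noncomputable def bsize (j : ℕ) : ℕ := (block S j).card

/-- Rank of a position within its block. -/
noncomputable def rk (p : Fin n) : ℕ :=
  (Finset.univ.filter fun q : Fin n => blk S q = blk S p ∧ (q : ℕ) < (p : ℕ)).card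

noncomputable def cnt (w : Fin n → ℕ) (v j : ℕ) : ℕ :=
  (Finset.univ.filter fun p => w p = v ∧ blk S p = j).card

/-- Blockwise monotone. -/
def BM (w : Fin n → ℕ) : Prop :=
  ∀ p q : Fin n, blk S p = blk S q → (p : ℕ) ≤ (q : ℕ) → w p ≤ w q

noncomputable def Fc (c : ℕ → ℕ → ℕ) (v j : ℕ) : ℕ := ∑ v' ∈ Finset.range (v + 1), c v' j

noncomputable def build (c : ℕ → ℕ → ℕ) (p : Fin n) : ℕ :=
  sInf {v | rk S p < Fc c v (blk S p)}

lemma blk_mono {p q : Fin n} (h : (p : ℕ) ≤ (q : ℕ)) : blk S p ≤ blk S q := by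
  apply Finset.card_le_card
  intro s hs
  simp only [Finset.mem_filter] at hs ⊢
  exact ⟨hs.1, by omega⟩

lemma blk_le (p : Fin n) : blk S p ≤ n - 1 :=
  calc blk S p ≤ S.card := Finset.card_filter_le _ _
    _ ≤ Fintype.card (Fin (n - 1)) := Finset.card_le_univ S
    _ = n - 1 := by simp

lemma blk_succ (i : ℕ) (h : i + 1 < n) :
    blk S ⟨i + 1, h⟩ = blk S ⟨i, by omega⟩ +
      (if (⟨i, by omega⟩ : Fin (n - 1)) ∈ S then 1 else 0) := by
  have hd : (Finset.filter (fun s : Fin (n - 1) => (s : ℕ) < i + 1) S)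
      = (Finset.filter (fun s : Fin (n - 1) => (s : ℕ) < i) S) ∪
        (Finset.filter (fun s : Fin (n - 1) => (s : ℕ) = i) S) := by
    rw [← Finset.filter_or]
    apply Finset.filter_congr
    intro s _
    constructor <;> (intro; omega)
  have hdis : Disjoint (Finset.filter (fun s : Fin (n - 1) => (s : ℕ) < i) S)
      (Finset.filter (fun s : Fin (n - 1) => (s : ℕ) = i) S) := by
    rw [Finset.disjoint_left]
    intro a ha hb
    simp only [Finset.mem_filter] at ha hb
    omega
  have he : (Finset.filter (fun s : Fin (n - 1) => (s : ℕ) = i) S)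
      = (Finset.filter (fun s : Fin (n - 1) => s = (⟨i, by omega⟩ : Fin (n - 1))) S) := by
    apply Finset.filter_congr
    intro s _
    constructor
    · intro hs; exact Fin.ext hs
    · intro hs; rw [hs]
  show (Finset.filter (fun s : Fin (n - 1) => (s : ℕ) < i + 1) S).card = _
  rw [hd, Finset.card_union_of_disjoint hdis, he, Finset.filter_eq']
  split <;> simp [blk]

lemma not_mem_iff_blk_succ_eq (i : ℕ) (h : i + 1 < n) :
    (⟨i, by omega⟩ : Fin (n - 1)) ∉ S ↔ blk S ⟨i + 1, h⟩ = blk S ⟨i, by omega⟩ := by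
  rw [blk_succ S i h]
  split <;> rename_i hmem
  · simp [hmem]
  · simp [hmem]

/-- Des w ⊆ S iff blockwise monotone. -/
lemma des_subset_iff_BM (w : Fin n → ℕ) : Des w ⊆ S ↔ BM S w := by
  constructor
  · intro hsub
    have step : ∀ (i : ℕ) (h : i + 1 < n),
        blk S ⟨i + 1, h⟩ = blk S ⟨i, by omega⟩ → w ⟨i, by omega⟩ ≤ w ⟨i + 1, h⟩ := by
      intro i h hblk
      by_contra hlt
      push_neg at hlt
      have hmem : (⟨i, by omega⟩ : Fin (n - 1)) ∈ Des w := (mem_Des w _).mpr hlt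
      exact ((not_mem_iff_blk_succ_eq S i h).mpr hblk) (hsub hmem)
    have H : ∀ (d i : ℕ) (hd : i + d < n),
        blk S ⟨i, by omega⟩ = blk S ⟨i + d, hd⟩ → w ⟨i, by omega⟩ ≤ w ⟨i + d, hd⟩ := by
      intro d
      induction d with
      | zero => intro i hd _; exact le_of_eq rfl
      | succ d ih =>
        intro i hd hblk
        have h1 : blk S (⟨i, by omega⟩ : Fin n) ≤ blk S ⟨i + d, by omega⟩ :=
          blk_mono S (by simp)
        have h2 : blk S (⟨i + d, by omega⟩ : Fin n) ≤ blk S ⟨i + d + 1, by omega⟩ :=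
          blk_mono S (by simp)
        have hb1 : blk S (⟨i, by omega⟩ : Fin n) = blk S ⟨i + d, by omega⟩ := by
          have h3 : blk S (⟨i + (d+1), hd⟩ : Fin n) = blk S ⟨i + d + 1, by omega⟩ := by
            congr 1
          omega
        have hb2 : blk S (⟨i + d + 1, by omega⟩ : Fin n) = blk S ⟨i + d, by omega⟩ := by
          have h3 : blk S (⟨i + (d+1), hd⟩ : Fin n) = blk S ⟨i + d + 1, by omega⟩ := by
            congr 1
          omega
        have hih := ih i (by omega) hb1
        have hst := step (i + d) (by omega) hb2
        have hfin : w (⟨i + (d+1), hd⟩ : Fin n) = w ⟨i + d + 1, by omega⟩ := by congr 1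
        rw [hfin]
        omega
    intro p q hblk hle
    have hp : p = ⟨(p : ℕ), p.2⟩ := Fin.ext rfl
    have hq : q = ⟨(p : ℕ) + ((q : ℕ) - (p : ℕ)), by omega⟩ := Fin.ext (by simp; omega)
    rw [hp, hq] at hblk ⊢
    exact H ((q : ℕ) - (p : ℕ)) (p : ℕ) (by omega) hblk
  · intro hbm
    intro i hi
    rw [mem_Des] at hi
    by_contra hmem
    have h1 : (i : ℕ) + 1 < n := by have := i.2; omega
    have hmem' : (⟨(i : ℕ), by omega⟩ : Fin (n - 1)) ∉ S := by
      intro hc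
      exact hmem (by simpa using hc)
    have hblk := (not_mem_iff_blk_succ_eq S (i : ℕ) h1).mp hmem'
    have := hbm ⟨(i : ℕ), by omega⟩ ⟨(i : ℕ) + 1, h1⟩ hblk.symm (by simp)
    omega


/-! ### Rank lemmas -/

lemma rk_lt_bsize (p : Fin n) : rk S p < bsize S (blk S p) := by
  apply Finset.card_lt_card
  constructor
  · intro q hq
    simp only [Finset.mem_filter, Finset.mem_univ, true_and, block] at hq ⊢
    exact hq.1
  · intro hsub
    have hp : p ∈ block S (blk S p) := by simp [block]
    have := hsub hp
    simp only [Finset.mem_filter, Finset.mem_univ, true_and] at this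
    omega

lemma rk_strictMono {p q : Fin n} (hblk : blk S p = blk S q) (hlt : (p : ℕ) < (q : ℕ)) :
    rk S p < rk S q := by
  apply Finset.card_lt_card
  constructor
  · intro r hr
    simp only [Finset.mem_filter, Finset.mem_univ, true_and] at hr ⊢
    exact ⟨hr.1.trans hblk, by omega⟩
  · intro hsub
    have hp : p ∈ (Finset.univ.filter fun r : Fin n => blk S r = blk S q ∧ (r : ℕ) < (q : ℕ)) := by
      simp only [Finset.mem_filter, Finset.mem_univ, true_and]
      exact ⟨hblk, hlt⟩
    have := hsub hp
    simp only [Finset.mem_filter, Finset.mem_univ, true_and] at this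
    omega

lemma rk_mono {p q : Fin n} (hblk : blk S p = blk S q) (hle : (p : ℕ) ≤ (q : ℕ)) :
    rk S p ≤ rk S q := by
  rcases eq_or_lt_of_le hle with h | h
  · have : p = q := Fin.ext h
    rw [this]
  · exact (rk_strictMono S hblk h).le

lemma rk_inj {p q : Fin n} (hp : blk S p = blk S q) (h : rk S p = rk S q) : p = q := by
  by_contra hne
  have : (p : ℕ) ≠ (q : ℕ) := fun hc => hne (Fin.ext hc)
  rcases lt_or_gt_of_ne this with hlt | hlt
  · have := rk_strictMono S hp hlt; omega
  · have := rk_strictMono S hp.symm hlt; omega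

lemma rk_surj (j r : ℕ) (hr : r < bsize S j) : ∃ p ∈ block S j, rk S p = r := by
  have hmaps : ∀ p ∈ block S j, rk S p ∈ Finset.range (bsize S j) := by
    intro p hp
    simp only [block, Finset.mem_filter, Finset.mem_univ, true_and] at hp
    rw [Finset.mem_range]
    have := rk_lt_bsize S p
    rwa [hp] at this
  have hinj : ∀ p₁ ∈ block S j, ∀ p₂ ∈ block S j, rk S p₁ = rk S p₂ → p₁ = p₂ := by
    intro p₁ h₁ p₂ h₂ h
    simp only [block, Finset.mem_filter, Finset.mem_univ, true_and] at h₁ h₂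
    exact rk_inj S (h₁.trans h₂.symm) h
  have hcard : (Finset.range (bsize S j)).card ≤ (block S j).card := by
    simp [bsize]
  have := Finset.surj_on_of_inj_on_of_card_le (fun p _ => rk S p)
    (fun p hp => hmaps p hp) (fun p₁ p₂ h₁ h₂ => hinj p₁ h₁ p₂ h₂) hcard r
    (Finset.mem_range.mpr hr)
  obtain ⟨p, hp, hpr⟩ := this
  exact ⟨p, hp, hpr.symm⟩

lemma card_rk_lt (j m : ℕ) (hm : m ≤ bsize S j) :
    ((block S j).filter fun p => rk S p < m).card = m := by
  have key : ((block S j).filter fun p => rk S p < m).card = (Finset.range m).card := by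
    apply Finset.card_bij (fun p _ => rk S p)
    · intro p hp
      simp only [Finset.mem_filter] at hp
      exact Finset.mem_range.mpr hp.2
    · intro p₁ h₁ p₂ h₂ h
      simp only [Finset.mem_filter, block, Finset.mem_univ, true_and] at h₁ h₂
      exact rk_inj S (h₁.1.trans h₂.1.symm) h
    · intro r hr
      rw [Finset.mem_range] at hr
      obtain ⟨p, hp, hpr⟩ := rk_surj S j r (by omega)
      refine ⟨p, ?_, hpr⟩
      simp only [Finset.mem_filter]
      exact ⟨hp, by omega⟩
  simpa using key


/-! ### Fc and build lemmas -/

lemma Fc_mono (c : ℕ → ℕ → ℕ) {v v' : ℕ} (h : v ≤ v') (j : ℕ) : Fc c v j ≤ Fc c v' j :=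
  Finset.sum_le_sum_of_subset (Finset.range_subset_range.mpr (by omega))

lemma Fc_succ (c : ℕ → ℕ → ℕ) (v j : ℕ) : Fc c (v + 1) j = Fc c v j + c (v + 1) j :=
  Finset.sum_range_succ _ _

section Build

variable {c : ℕ → ℕ → ℕ}
variable (hsupp : ∀ v j, (v = 0 ∨ k < v) → c v j = 0)
variable (htot : ∀ j, Fc c k j = bsize S j)

include hsupp in
lemma Fc_stab {v : ℕ} (h : k ≤ v) (j : ℕ) : Fc c v j = Fc c k j := by
  unfold Fc
  refine (Finset.sum_subset (Finset.range_subset_range.mpr (by omega)) ?_).symm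
  intro x hx hnx
  simp only [Finset.mem_range] at hx hnx
  exact hsupp x j (by omega)

include hsupp htot in
lemma Fc_le_bsize (v j : ℕ) : Fc c v j ≤ bsize S j := by
  rcases le_or_gt v k with h | h
  · rw [← htot j]; exact Fc_mono c h j
  · rw [Fc_stab hsupp h.le j, htot j]

include htot in
lemma build_set_nonempty (p : Fin n) : {v | rk S p < Fc c v (blk S p)}.Nonempty :=
  ⟨k, by simp only [Set.mem_setOf_eq, htot]; exact rk_lt_bsize S p⟩

include htot in
lemma build_spec (p : Fin n) : rk S p < Fc c (build S c p) (blk S p) :=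
  Nat.sInf_mem (build_set_nonempty S htot p)

include htot in
lemma build_le_iff (p : Fin n) (v : ℕ) :
    build S c p ≤ v ↔ rk S p < Fc c v (blk S p) := by
  constructor
  · intro h
    exact lt_of_lt_of_le (build_spec S htot p) (Fc_mono c h _)
  · intro h
    exact Nat.sInf_le h

include htot in
lemma build_le_k (p : Fin n) : build S c p ≤ k :=
  (build_le_iff S htot p k).mpr (by rw [htot]; exact rk_lt_bsize S p)

include hsupp htot in
lemma build_pos (p : Fin n) : 1 ≤ build S c p := by
  by_contra h
  push_neg at h
  interval_cases hb : build S c p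
  have := build_spec S htot p
  rw [hb] at this
  unfold Fc at this
  simp [hsupp 0 (blk S p) (Or.inl rfl)] at this

include htot in
lemma BM_build : BM S (build S c) := by
  intro p q hblk hle
  rw [build_le_iff S htot p (build S c q), hblk]
  exact lt_of_le_of_lt (rk_mono S hblk hle) (build_spec S htot q)

/-- Auxiliary set identity: `cnt` as a filter of a block. -/
lemma cnt_eq_block_filter (w : Fin n → ℕ) (v j : ℕ) :
    cnt S w v j = ((block S j).filter fun p => w p = v).card := by
  unfold cnt block
  rw [Finset.filter_filter]
  congr 1
  apply Finset.filter_congr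
  intro p _
  constructor
  · rintro ⟨h1, h2⟩; exact ⟨h2, h1⟩
  · rintro ⟨h1, h2⟩; exact ⟨h2, h1⟩

include hsupp htot in
lemma card_build_le (v j : ℕ) :
    ((block S j).filter fun p => build S c p ≤ v).card = Fc c v j := by
  have h1 : ((block S j).filter fun p => build S c p ≤ v)
      = ((block S j).filter fun p => rk S p < Fc c v j) := by
    apply Finset.filter_congr
    intro p hp
    simp only [block, Finset.mem_filter, Finset.mem_univ, true_and] at hp
    rw [build_le_iff S htot p v, hp]
  rw [h1]
  exact card_rk_lt S j _ (Fc_le_bsize S hsupp htot v j)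

include hsupp htot in
lemma cnt_build (v j : ℕ) : cnt S (build S c) v j = c v j := by
  rcases Nat.eq_zero_or_pos v with hv | hv
  · subst hv
    rw [cnt_eq_block_filter, hsupp 0 j (Or.inl rfl)]
    rw [Finset.card_eq_zero, Finset.filter_eq_empty_iff]
    intro p _
    have := build_pos S hsupp htot p
    omega
  · obtain ⟨v', rfl⟩ : ∃ v', v = v' + 1 := ⟨v - 1, by omega⟩
    have hsplit : ((block S j).filter fun p => build S c p ≤ v' + 1)
        = ((block S j).filter fun p => build S c p ≤ v') ∪
          ((block S j).filter fun p => build S c p = v' + 1) := by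
      rw [← Finset.filter_or]
      apply Finset.filter_congr
      intro p _
      constructor <;> (intro; omega)
    have hdis : Disjoint ((block S j).filter fun p => build S c p ≤ v')
        ((block S j).filter fun p => build S c p = v' + 1) := by
      rw [Finset.disjoint_left]
      intro a ha hb
      simp only [Finset.mem_filter] at ha hb
      omega
    have hcard := card_build_le S hsupp htot (v' + 1) j
    rw [hsplit, Finset.card_union_of_disjoint hdis, card_build_le S hsupp htot v' j] at hcard
    rw [Fc_succ] at hcard
    rw [cnt_eq_block_filter]
    omega

end Build

/-! ### Counts of an actual word -/

lemma cnt_supp (w : Fin n → ℕ) (hw : ∀ p, 1 ≤ w p ∧ w p ≤ k) (v j : ℕ)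
    (hv : v = 0 ∨ k < v) : cnt S w v j = 0 := by
  rw [cnt, Finset.card_eq_zero, Finset.filter_eq_empty_iff]
  intro p _
  have := hw p
  rintro ⟨h1, h2⟩
  omega

lemma Fc_cnt_eq_card (w : Fin n → ℕ) (v j : ℕ) :
    Fc (cnt S w) v j = ((block S j).filter fun p => w p ≤ v).card := by
  rw [Finset.card_eq_sum_card_fiberwise
    (f := w) (t := Finset.range (v + 1)) (by
      intro p hp
      simp only [Finset.mem_coe, Finset.mem_filter] at hp
      rw [Finset.mem_coe, Finset.mem_range]
      omega)]
  unfold Fc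
  apply Finset.sum_congr rfl
  intro v' hv'
  rw [Finset.mem_range] at hv'
  rw [cnt_eq_block_filter]
  congr 1
  rw [Finset.filter_filter]
  apply Finset.filter_congr
  intro p _
  omega

lemma cnt_tot (w : Fin n → ℕ) (hw : ∀ p, 1 ≤ w p ∧ w p ≤ k) (j : ℕ) :
    Fc (cnt S w) k j = bsize S j := by
  rw [Fc_cnt_eq_card]
  unfold bsize
  congr 1
  rw [Finset.filter_eq_self]
  intro p _
  exact (hw p).2

/-- Uniqueness: a blockwise monotone word is rebuilt from its counts. -/
lemma build_cnt (w : Fin n → ℕ) (hw : ∀ p, 1 ≤ w p ∧ w p ≤ k) (hbm : BM S w) :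
    build S (cnt S w) = w := by
  funext p
  have hmem : w p ∈ {v | rk S p < Fc (cnt S w) v (blk S p)} := by
    rw [Set.mem_setOf_eq, Fc_cnt_eq_card]
    have hsub : insert p (Finset.univ.filter fun q : Fin n =>
          blk S q = blk S p ∧ (q : ℕ) < (p : ℕ))
        ⊆ (block S (blk S p)).filter fun q => w q ≤ w p := by
      intro q hq
      rw [Finset.mem_insert] at hq
      simp only [Finset.mem_filter, block, Finset.mem_univ, true_and]
      rcases hq with rfl | hq
      · exact ⟨rfl, le_refl _⟩
      · simp only [Finset.mem_filter, Finset.mem_univ, true_and] at hq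
        exact ⟨hq.1, hbm q p hq.1 hq.2.le⟩
    have hcard := Finset.card_le_card hsub
    rw [Finset.card_insert_of_notMem (by simp)] at hcard
    unfold rk
    omega
  have hlb : ∀ v, v < w p → v ∉ {v | rk S p < Fc (cnt S w) v (blk S p)} := by
    intro v hv
    rw [Set.mem_setOf_eq, Fc_cnt_eq_card]
    push_neg
    apply Finset.card_le_card
    intro q hq
    simp only [Finset.mem_filter, block, Finset.mem_univ, true_and] at hq ⊢
    refine ⟨hq.1, ?_⟩
    by_contra hge
    push_neg at hge
    have := hbm p q hq.1.symm hge
    omega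
  apply le_antisymm (Nat.sInf_le hmem)
  by_contra hlt
  push_neg at hlt
  exact hlb _ hlt (Nat.sInf_mem ⟨w p, hmem⟩)


/-! ### The letter permutation on ℕ -/

noncomputable def sig (τ : Equiv.Perm (Fin k)) (v : ℕ) : ℕ :=
  if h : 1 ≤ v ∧ v ≤ k then ((τ ⟨v - 1, by omega⟩ : Fin k) : ℕ) + 1 else v

lemma sig_zero (τ : Equiv.Perm (Fin k)) : sig τ 0 = 0 := by simp [sig]

lemma sig_gt (τ : Equiv.Perm (Fin k)) {v : ℕ} (h : k < v) : sig τ v = v := by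
  rw [sig, dif_neg (by omega)]

lemma sig_mem (τ : Equiv.Perm (Fin k)) {v : ℕ} (h : 1 ≤ v ∧ v ≤ k) :
    1 ≤ sig τ v ∧ sig τ v ≤ k := by
  rw [sig, dif_pos h]
  have := (τ ⟨v - 1, by omega⟩).2
  omega

lemma sig_apply_fin (τ : Equiv.Perm (Fin k)) (i : Fin k) :
    sig τ ((i : ℕ) + 1) = (τ i : ℕ) + 1 := by
  have hi := i.2
  rw [sig, dif_pos (by omega)]
  congr 2
  all_goals exact Fin.ext (by simp)

lemma sig_sig (τ : Equiv.Perm (Fin k)) (v : ℕ) : sig τ (sig τ⁻¹ v) = v := by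
  by_cases h : 1 ≤ v ∧ v ≤ k
  · have h1 : sig τ⁻¹ v = ((τ⁻¹ ⟨v - 1, by omega⟩ : Fin k) : ℕ) + 1 := by
      rw [sig, dif_pos h]
    rw [h1, sig_apply_fin τ (τ⁻¹ ⟨v - 1, by omega⟩), Equiv.Perm.coe_inv, Equiv.apply_symm_apply]
    simp only [Fin.val_mk]
    omega
  · have h0 : sig τ⁻¹ v = v := by rw [sig, dif_neg h]
    rw [h0, sig, dif_neg h]

lemma sum_sig (τ : Equiv.Perm (Fin k)) (c : ℕ → ℕ) :
    ∑ v ∈ Finset.range (k + 1), c (sig τ v) = ∑ v ∈ Finset.range (k + 1), c v := by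
  refine Finset.sum_nbij' (sig τ) (sig τ⁻¹) ?_ ?_ ?_ ?_ (fun a _ => rfl)
  · intro v hv
    rw [Finset.mem_range] at hv ⊢
    by_cases h : 1 ≤ v ∧ v ≤ k
    · have := sig_mem τ h; omega
    · have : v = 0 := by omega
      rw [this, sig_zero]; omega
  · intro v hv
    rw [Finset.mem_range] at hv ⊢
    by_cases h : 1 ≤ v ∧ v ≤ k
    · have := sig_mem τ⁻¹ h; omega
    · have : v = 0 := by omega
      rw [this, sig_zero]; omega
  · intro v _
    have := sig_sig τ⁻¹ v
    rwa [inv_inv] at this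
  · intro v _
    exact sig_sig τ v

/-! ### The bijection φ -/

noncomputable def phi (τ : Equiv.Perm (Fin k)) (w : Fin n → ℕ) : Fin n → ℕ :=
  build S (fun v j => cnt S w (sig τ v) j)

section Phi

variable (τ : Equiv.Perm (Fin k)) {w : Fin n → ℕ} (hw : ∀ p, 1 ≤ w p ∧ w p ≤ k)

include hw in
lemma phi_supp : ∀ v j, (v = 0 ∨ k < v) → cnt S w (sig τ v) j = 0 := by
  intro v j hv
  rcases hv with rfl | hv
  · rw [sig_zero]; exact cnt_supp S w hw 0 j (Or.inl rfl)
  · rw [sig_gt τ hv]; exact cnt_supp S w hw v j (Or.inr hv)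

include hw in
lemma phi_tot : ∀ j, Fc (fun v j => cnt S w (sig τ v) j) k j = bsize S j := by
  intro j
  unfold Fc
  rw [sum_sig τ (fun v => cnt S w v j)]
  exact cnt_tot S w hw j

include hw in
lemma phi_bounds : ∀ p, 1 ≤ phi S τ w p ∧ phi S τ w p ≤ k := by
  intro p
  exact ⟨build_pos S (phi_supp S τ hw) (phi_tot S τ hw) p,
    build_le_k S (phi_tot S τ hw) p⟩

include hw in
lemma phi_BM : BM S (phi S τ w) := BM_build S (phi_tot S τ hw)

include hw in
lemma cnt_phi (v j : ℕ) : cnt S (phi S τ w) v j = cnt S w (sig τ v) j :=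
  cnt_build S (phi_supp S τ hw) (phi_tot S τ hw) v j

include hw in
lemma phi_phi (hbm : BM S w) : phi S τ⁻¹ (phi S τ w) = w := by
  have hkey : (fun v j => cnt S (phi S τ w) (sig τ⁻¹ v) j) = cnt S w := by
    funext v j
    rw [cnt_phi S τ hw, sig_sig]
  show build S (fun v j => cnt S (phi S τ w) (sig τ⁻¹ v) j) = w
  rw [hkey]
  exact build_cnt S w hw hbm

include hw in
lemma card_eq_sum_cnt (v : ℕ) :
    (Finset.univ.filter fun p : Fin n => w p = v).card = ∑ j ∈ Finset.range n, cnt S w v j := by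
  rw [Finset.card_eq_sum_card_fiberwise (f := blk S) (t := Finset.range n) (by
    intro p _
    rw [Finset.mem_coe, Finset.mem_range]
    have h1 := blk_le S p
    have h2 := p.2
    omega)]
  apply Finset.sum_congr rfl
  intro j _
  rw [cnt, Finset.filter_filter]

end Phi

/-! ### α-symmetry -/

/-- Multiset permutations of `μ` with descent set contained in `S`. -/
noncomputable def Wle (μ : Fin k → ℕ) : Finset (Fin n → ℕ) :=
  (Fintype.piFinset fun _ : Fin n => Finset.Icc 1 k).filter
    (fun w => IsMsPermOf μ w ∧ Des w ⊆ S)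

lemma mem_Wle_bounds {μ : Fin k → ℕ} {w : Fin n → ℕ} (hw : w ∈ Wle S μ) :
    ∀ p, 1 ≤ w p ∧ w p ≤ k := by
  intro p
  rw [Wle, Finset.mem_filter, Fintype.mem_piFinset] at hw
  have := hw.1 p
  rw [Finset.mem_Icc] at this
  exact this

lemma phi_mem_Wle (τ : Equiv.Perm (Fin k)) (μ : Fin k → ℕ) (w : Fin n → ℕ)
    (hw : w ∈ Wle S μ) : phi S τ w ∈ Wle S (μ ∘ τ) := by
  have hb := mem_Wle_bounds S hw
  rw [Wle, Finset.mem_filter, Fintype.mem_piFinset] at hw ⊢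
  obtain ⟨-, hms, hdes⟩ := hw
  have hphib := phi_bounds S τ hb
  refine ⟨by intro p; rw [Finset.mem_Icc]; exact hphib p, ⟨?_, ?_⟩, ?_⟩
  · intro p
    refine ⟨⟨phi S τ w p - 1, by have := hphib p; omega⟩, by have := hphib p; simp; omega⟩
  · intro i
    rw [card_eq_sum_cnt S hphib ((i : ℕ) + 1)]
    have : ∀ j, cnt S (phi S τ w) ((i : ℕ) + 1) j = cnt S w ((τ i : ℕ) + 1) j := by
      intro j
      rw [cnt_phi S τ hb, sig_apply_fin]
    rw [Finset.sum_congr rfl (fun j _ => this j), ← card_eq_sum_cnt S hb ((τ i : ℕ) + 1)]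
    exact hms.2 (τ i)
  · rw [des_subset_iff_BM]
    exact phi_BM S τ hb

lemma Wle_card_eq (τ : Equiv.Perm (Fin k)) (μ : Fin k → ℕ) :
    (Wle S μ).card = (Wle S (μ ∘ τ)).card := by
  have hcomp : ((μ ∘ τ) ∘ (τ⁻¹ : Equiv.Perm (Fin k))) = μ := by
    funext i
    simp [Function.comp, Equiv.Perm.coe_inv, Equiv.apply_symm_apply]
  apply Finset.card_bij' (fun w _ => phi S τ w) (fun w _ => phi S τ⁻¹ w)
  · intro w hw
    exact phi_mem_Wle S τ μ w hw
  · intro w hw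
    have := phi_mem_Wle S τ⁻¹ (μ ∘ τ) w hw
    rwa [hcomp] at this
  · intro w hw
    have hb := mem_Wle_bounds S hw
    have hbm : BM S w := by
      rw [Wle, Finset.mem_filter] at hw
      exact (des_subset_iff_BM S w).mp hw.2.2
    exact phi_phi S τ hb hbm
  · intro w hw
    have hb := mem_Wle_bounds S hw
    have hbm : BM S w := by
      rw [Wle, Finset.mem_filter] at hw
      exact (des_subset_iff_BM S w).mp hw.2.2
    have := phi_phi S τ⁻¹ hb hbm
    rwa [inv_inv] at this


/-! ### β-symmetry by strong induction -/

/-- Multiset permutations of `μ` with descent set exactly `S`. -/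
noncomputable def Weq (μ : Fin k → ℕ) : Finset (Fin n → ℕ) :=
  (Fintype.piFinset fun _ : Fin n => Finset.Icc 1 k).filter
    (fun w => IsMsPermOf μ w ∧ Des w = S)

lemma alpha_sum (μ : Fin k → ℕ) :
    (Wle S μ).card = ∑ T ∈ S.powerset, (Weq T μ).card := by
  rw [Finset.card_eq_sum_card_fiberwise (f := Des) (t := S.powerset) (by
    intro w hw
    simp only [Finset.mem_coe, Wle, Finset.mem_filter] at hw
    exact Finset.mem_powerset.mpr hw.2.2)]
  apply Finset.sum_congr rfl
  intro T hT
  rw [Finset.mem_powerset] at hT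
  congr 1
  ext w
  simp only [Wle, Weq, Finset.mem_filter]
  constructor
  · rintro ⟨⟨h1, h2, h3⟩, h4⟩
    exact ⟨h1, h2, h4⟩
  · rintro ⟨h1, h2, h3⟩
    exact ⟨⟨h1, h2, h3 ▸ hT⟩, h3⟩

lemma beta_sym (τ : Equiv.Perm (Fin k)) (μ : Fin k → ℕ) :
    ∀ (m : ℕ) (S : Finset (Fin (n - 1))), S.card = m →
      (Weq S μ).card = (Weq S (μ ∘ τ)).card := by
  intro m
  induction m using Nat.strong_induction_on with
  | _ m IH =>
    intro S hcard
    have h1 := alpha_sum S μ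
    have h2 := alpha_sum S (μ ∘ τ)
    have hW := Wle_card_eq S τ μ
    have hself : S ∈ S.powerset := Finset.mem_powerset.mpr (le_refl _)
    rw [← Finset.add_sum_erase _ _ hself] at h1 h2
    have hIH : ∑ T ∈ S.powerset.erase S, (Weq T μ).card
        = ∑ T ∈ S.powerset.erase S, (Weq T (μ ∘ τ)).card := by
      apply Finset.sum_congr rfl
      intro T hT
      rw [Finset.mem_erase, Finset.mem_powerset] at hT
      have hss : T ⊂ S := HasSubset.Subset.ssubset_of_ne hT.2 hT.1
      have hlt : T.card < m := by
        rw [← hcard]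
        exact Finset.card_lt_card hss
      exact IH T.card hlt T rfl
    omega

/-! ### The descent-set condition corresponding to NDD and final rise -/

def DOK (S : Finset (Fin (n - 1))) : Prop :=
  (∀ (i : ℕ) (h1 : i < n - 1) (h2 : i + 1 < n - 1),
      ¬((⟨i, h1⟩ : Fin (n - 1)) ∈ S ∧ (⟨i + 1, h2⟩ : Fin (n - 1)) ∈ S)) ∧
  ∀ (h : n - 2 < n - 1), (⟨n - 2, h⟩ : Fin (n - 1)) ∉ S

lemma cond_iff (w : Fin n → ℕ) :
    (NDDF w ∧ ∀ h : 0 < n, w ⟨n - 2, by omega⟩ ≤ w ⟨n - 1, by omega⟩) ↔ DOK (Des w) := by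
  constructor
  · rintro ⟨hndd, hlast⟩
    constructor
    · rintro i h1 h2 ⟨ha, hb⟩
      rw [mem_Des] at ha hb
      simp only [Fin.val_mk] at ha hb
      exact hndd i (by omega) ⟨ha, hb⟩
    · intro h hmem
      rw [mem_Des] at hmem
      simp only [Fin.val_mk] at hmem
      have hn2 : 2 ≤ n := by omega
      have hlast' := hlast (by omega)
      have hcast : w ⟨n - 2 + 1, by omega⟩ = w ⟨n - 1, by omega⟩ := by
        congr 1
        exact Fin.ext (by simp; omega)
      rw [hcast] at hmem
      omega
  · rintro ⟨hndd, hlast⟩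
    constructor
    · rintro i h ⟨ha, hb⟩
      have ha' : (⟨i, by omega⟩ : Fin (n - 1)) ∈ Des w := by
        rw [mem_Des]
        exact ha
      have hb' : (⟨i + 1, by omega⟩ : Fin (n - 1)) ∈ Des w := by
        rw [mem_Des]
        exact hb
      exact hndd i (by omega) (by omega) ⟨ha', hb'⟩
    · intro h0
      by_cases hn : 2 ≤ n
      · by_contra hlt
        push_neg at hlt
        have hmem : (⟨n - 2, by omega⟩ : Fin (n - 1)) ∈ Des w := by
          rw [mem_Des]
          have hcast : w ⟨n - 2 + 1, by omega⟩ = w ⟨n - 1, by omega⟩ := by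
            congr 1
            exact Fin.ext (by simp; omega)
          exact lt_of_eq_of_lt hcast hlt
        exact hlast (by omega) hmem
      · have hn1 : n = 1 := by omega
        apply le_of_eq
        congr 1
        exact Fin.ext (by simp; omega)


lemma desF_eq_card_Des {m : ℕ} (w : Fin m → ℕ) : desF w = (Des w).card := rfl

lemma fiber_eq (S : Finset (Fin (n - 1))) (ν : Fin k → ℕ) :
    ((Fintype.piFinset fun _ : Fin n => Finset.Icc 1 k).filter
        (fun w => IsMsPermOf ν w ∧ NDDF w ∧
          ∀ h : 0 < n, w ⟨n - 2, by omega⟩ ≤ w ⟨n - 1, by omega⟩)).filter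
      (fun w => Des w = S)
    = if DOK S then Weq S ν else ∅ := by
  split <;> rename_i hD
  · ext w
    simp only [Finset.mem_filter, Weq]
    constructor
    · rintro ⟨⟨h1, h2, h3⟩, h4⟩
      exact ⟨h1, h2, h4⟩
    · rintro ⟨h1, h2, h3⟩
      refine ⟨⟨h1, h2, ?_⟩, h3⟩
      rw [cond_iff w, h3]
      exact hD
  · rw [Finset.eq_empty_iff_forall_notMem]
    intro w hw
    simp only [Finset.mem_filter] at hw
    obtain ⟨⟨-, -, hc1, hc2⟩, h4⟩ := hw
    apply hD
    rw [← h4]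
    exact (cond_iff w).mp ⟨hc1, hc2⟩

end Stmt18

/-- from the proof of Theorem 8.1 of Linusson–Shareshian–Wachs:
the polynomial `F_μ` is invariant under rearranging the parts of the weak composition
`μ` of `n`. -/
theorem statement_18 (n k : ℕ) (hn : 1 ≤ n) (μ : Fin k → ℕ) (hsum : ∑ i, μ i = n)
    (τ : Equiv.Perm (Fin k)) :
    Fpoly n k μ = Fpoly n k (μ ∘ τ) := by
  have hfib : ∀ ν : Fin k → ℕ, Fpoly n k ν =
      ∑ S : Finset (Fin (n - 1)),
        (((Fintype.piFinset fun _ : Fin n => Finset.Icc 1 k).filter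
            (fun w => IsMsPermOf ν w ∧ NDDF w ∧
              ∀ h : 0 < n, w ⟨n - 2, by omega⟩ ≤ w ⟨n - 1, by omega⟩)).filter
          (fun w => Stmt18.Des w = S)).card •
          ((X : Polynomial ℤ) ^ (S.card + 1) * (X + 1) ^ (n - 1 - 2 * S.card)) := by
    intro ν
    rw [Fpoly, ← Finset.sum_fiberwise_of_maps_to (g := Stmt18.Des)
      (t := (Finset.univ : Finset (Finset (Fin (n - 1)))))
      (fun w _ => Finset.mem_univ _)]
    apply Finset.sum_congr rfl
    intro S _
    rw [Finset.sum_congr rfl (fun w hw => ?_), Finset.sum_const]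
    have hS : Stmt18.Des w = S := (Finset.mem_filter.mp hw).2
    rw [Stmt18.desF_eq_card_Des, hS]
  rw [hfib μ, hfib (μ ∘ τ)]
  apply Finset.sum_congr rfl
  intro S _
  congr 1
  rw [Stmt18.fiber_eq S μ, Stmt18.fiber_eq S (μ ∘ τ)]
  split
  · exact Stmt18.beta_sym τ μ S.card S rfl
  · rfl
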